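/- (Corollary, fully private directions and transmission zeros) Assume N − k* > n and let u ∈ ℝ^p be nonzero. Then C A^j B u = 0 for all integers j with 0 ≤ j ≤ N − k* − 1 if and only if there exist a complex number z₀ and a vector x⁰ ∈ ℂ^n such that (A − z₀ I) x⁰ + B u = 0 and C A^k x⁰ = 0 for all integers k with 0 ≤ k ≤ n − 1 (where A, B, C and u are regarded as complex matrices and vectors via the inclusion ℝ ↪ ℂ). In other words, u is a fully private input direction if and only if u is a zero-input direction whose corresponding zero-state direction lies in the kernel of the observability matrix. -/

import Mathlib

open Matrix Finset

open Polynomial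

private lemma sum_mulVec' {K : Type*} [CommRing K] {m n : ℕ} {ι : Type*} (s : Finset ι)
    (f : ι → Matrix (Fin m) (Fin n) K) (v : Fin n → K) :
    (∑ i ∈ s, f i) *ᵥ v = ∑ i ∈ s, (f i) *ᵥ v := by
  ext j
  simp only [Matrix.mulVec, dotProduct, Matrix.sum_apply, Finset.sum_apply, Finset.sum_mul]
  rw [Finset.sum_comm]

private lemma obs_all {K : Type*} [Field K] {n m : ℕ}
    (A : Matrix (Fin n) (Fin n) K) (C : Matrix (Fin m) (Fin n) K) (v : Fin n → K)
    (h : ∀ k < n, (C * A ^ k) *ᵥ v = 0) : ∀ k, (C * A ^ k) *ᵥ v = 0 := by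
  intro k
  rcases Nat.eq_zero_or_pos n with h0 | h0
  · subst h0; ext j; simp [Matrix.mulVec, dotProduct]
  by_cases hk : k < n
  · exact h k hk
  have hd : A.charpoly.natDegree = n := by
    simpa using A.charpoly_natDegree_eq_dim
  have hne1 : A.charpoly ≠ 1 := by
    intro e; rw [e] at hd; simp at hd; omega
  have hlt : ((X : K[X]) ^ k %ₘ A.charpoly).natDegree < n := by
    have := natDegree_modByMonic_lt ((X : K[X]) ^ k) A.charpoly_monic hne1
    omega
  rw [Matrix.pow_eq_aeval_mod_charpoly, aeval_eq_sum_range' hlt, Matrix.mul_sum, sum_mulVec']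
  refine Finset.sum_eq_zero fun i hi => ?_
  rw [Matrix.mul_smul, smul_mulVec, h i (mem_range.mp hi), smul_zero]

private lemma obs_poly {K : Type*} [Field K] {n m : ℕ}
    (A : Matrix (Fin n) (Fin n) K) (C : Matrix (Fin m) (Fin n) K) (v : Fin n → K)
    (h : ∀ k < n, (C * A ^ k) *ᵥ v = 0) (q : K[X]) :
    (C * aeval A q) *ᵥ v = 0 := by
  rw [aeval_eq_sum_range, Matrix.mul_sum, sum_mulVec']
  refine Finset.sum_eq_zero fun i _ => ?_
  rw [Matrix.mul_smul, smul_mulVec, obs_all A C v h i, smul_zero]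

private lemma eval_charpoly' {K : Type*} [CommRing K] {n : ℕ} (M : Matrix (Fin n) (Fin n) K)
    (z : K) : M.charpoly.eval z = (z • (1 : Matrix (Fin n) (Fin n) K) - M).det := by
  rw [Matrix.charpoly, _root_.eval_det, matPolyEquiv_charmatrix, eval_sub, eval_X, eval_C]
  congr 1
  simp [Matrix.scalar_apply, Matrix.smul_one_eq_diagonal]

private lemma map_mulVec' {a b : ℕ} (M : Matrix (Fin a) (Fin b) ℝ) (v : Fin b → ℝ) :
    (M.map Complex.ofReal) *ᵥ (fun i => (v i : ℂ)) = fun i => ((M *ᵥ v) i : ℂ) := by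
  funext i
  rw [show (Complex.ofReal : ℝ → ℂ) = ⇑Complex.ofRealHom from rfl,
    RingHom.map_mulVec Complex.ofRealHom M v i]
  rfl

/-- **Corollary (fully private directions and transmission zeros).**
Assume `N − k* > n` and `u ≠ 0`. Then `u` is a fully private input direction
(`C A^j B u = 0` for all `0 ≤ j ≤ N − k* − 1`) if and only if there exist a complex number
`z₀` and a zero-state direction `x⁰ ∈ ℂ^n` with `(A − z₀ I) x⁰ + B u = 0` and
`C A^k x⁰ = 0` for all `0 ≤ k < n`, i.e. `u` is a zero-input direction whose zero-state
direction lies in the kernel of the observability matrix. -/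
theorem fully_private_iff_transmission_zero
    (n m p N kstar : ℕ) (hk : kstar < N) (hn : n < N - kstar)
    (A : Matrix (Fin n) (Fin n) ℝ) (B : Matrix (Fin n) (Fin p) ℝ)
    (C : Matrix (Fin m) (Fin n) ℝ)
    (u : Fin p → ℝ) (hu : u ≠ 0) :
    (∀ j : ℕ, j ≤ N - kstar - 1 → (C * A ^ j * B) *ᵥ u = 0) ↔
      ∃ (z₀ : ℂ) (x₀ : Fin n → ℂ),
        ((A.map (Complex.ofReal) - z₀ • 1) *ᵥ x₀ +
            (B.map (Complex.ofReal)) *ᵥ (fun i => (u i : ℂ)) = 0) ∧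
        ∀ k : ℕ, k < n → ((C.map (Complex.ofReal)) * (A.map (Complex.ofReal)) ^ k) *ᵥ x₀ = 0 := by
  set Aℂ := A.map (Complex.ofReal) with hAdef
  set Bℂ := B.map (Complex.ofReal) with hBdef
  set Cℂ := C.map (Complex.ofReal) with hCdef
  set uℂ : Fin p → ℂ := fun i => (u i : ℂ) with hudef
  have hocoe : (Complex.ofReal : ℝ → ℂ) = ⇑Complex.ofRealHom := rfl
  have hpow : ∀ j : ℕ, (A ^ j).map Complex.ofReal = Aℂ ^ j := by
    intro j
    rw [hAdef, hocoe]
    induction j with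
    | zero =>
        rw [pow_zero, pow_zero]
        exact Matrix.map_one _ (map_zero Complex.ofRealHom) (map_one Complex.ofRealHom)
    | succ j ih => rw [pow_succ, Matrix.map_mul, ih, pow_succ]
  have hmapCA : ∀ j : ℕ, (C * A ^ j).map Complex.ofReal = Cℂ * Aℂ ^ j := by
    intro j
    rw [hocoe, Matrix.map_mul, ← hocoe, hpow j, hCdef, hocoe]
  have hmapmul : ∀ j : ℕ, (C * A ^ j * B).map Complex.ofReal = Cℂ * Aℂ ^ j * Bℂ := by
    intro j
    rw [hocoe, Matrix.map_mul, ← hocoe, hmapCA j, hBdef, hocoe]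
  have hCABu : ∀ j : ℕ, (Cℂ * Aℂ ^ j * Bℂ) *ᵥ uℂ = fun i => (((C * A ^ j * B) *ᵥ u) i : ℂ) := by
    intro j
    rw [← hmapmul j, hudef, map_mulVec']
  constructor
  · intro h
    have hreal : ∀ k < n, (C * A ^ k) *ᵥ (B *ᵥ u) = 0 := by
      intro k hkn
      have h5 := h k (by omega)
      rwa [Matrix.mulVec_mulVec]
    have hrall : ∀ k, (C * A ^ k) *ᵥ (B *ᵥ u) = 0 := obs_all A C (B *ᵥ u) hreal
    set w : Fin n → ℂ := Bℂ *ᵥ uℂ with hwdef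
    have hw : w = fun i => (((B *ᵥ u) i : ℝ) : ℂ) := by
      rw [hwdef, hBdef, hudef, map_mulVec']
    have hcall : ∀ k < n, (Cℂ * Aℂ ^ k) *ᵥ w = 0 := by
      intro k _
      have h6 : (Cℂ * Aℂ ^ k) *ᵥ w = fun i => ((((C * A ^ k) *ᵥ (B *ᵥ u)) i : ℝ) : ℂ) := by
        rw [hw, ← hmapCA k, map_mulVec']
      rw [h6, hrall k]
      funext i; simp
    obtain ⟨z₀, hz⟩ : ∃ z : ℂ, Aℂ.charpoly.eval z ≠ 0 := by
      have h1 : Aℂ.charpoly ≠ 0 := Aℂ.charpoly_monic.ne_zero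
      have hfin : {x : ℂ | Aℂ.charpoly.IsRoot x}.Finite := Polynomial.finite_setOf_isRoot h1
      obtain ⟨z, hz⟩ := hfin.infinite_compl.nonempty
      exact ⟨z, hz⟩
    set D : Matrix (Fin n) (Fin n) ℂ := z₀ • 1 - Aℂ with hDdef
    have hdet : D.det ≠ 0 := by rw [hDdef, ← eval_charpoly']; exact hz
    set c₀ : ℂ := D.charpoly.coeff 0 with hc0def
    have hc0 : c₀ ≠ 0 := by
      intro e
      apply hdet
      rw [Matrix.det_eq_sign_charpoly_coeff, ← hc0def, e, mul_zero]
    set P : Matrix (Fin n) (Fin n) ℂ := aeval D D.charpoly.divX with hPdef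
    have hPD : P * D = -(c₀ • 1) := by
      have h2 : D.charpoly.divX * X + Polynomial.C c₀ = D.charpoly := divX_mul_X_add D.charpoly
      have h3 := congrArg (aeval D) h2
      rw [Matrix.aeval_self_charpoly, _root_.map_add, _root_.map_mul, aeval_X, aeval_C,
        Algebra.algebraMap_eq_smul_one] at h3
      exact eq_neg_of_add_eq_zero_left h3
    have hDP : D * P = -(c₀ • 1) := by
      rw [← hPD, hPdef]
      calc D * aeval D D.charpoly.divX = aeval D (X * D.charpoly.divX) := by
            rw [_root_.map_mul, aeval_X]
        _ = aeval D (D.charpoly.divX * X) := by rw [mul_comm]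
        _ = aeval D D.charpoly.divX * D := by rw [_root_.map_mul, aeval_X]
    refine ⟨z₀, (-c₀⁻¹) • (P *ᵥ w), ?_, ?_⟩
    · have hDx : D *ᵥ ((-c₀⁻¹) • (P *ᵥ w)) = w := by
        rw [Matrix.mulVec_smul, Matrix.mulVec_mulVec, hDP]
        funext i
        simp only [Pi.smul_apply, Matrix.neg_mulVec, Matrix.smul_mulVec,
          Matrix.one_mulVec, Pi.neg_apply, Pi.smul_apply, smul_eq_mul]
        field_simp
      have h7 : Aℂ - z₀ • 1 = -D := by rw [hDdef, neg_sub]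
      rw [h7, Matrix.neg_mulVec, hDx]
      exact neg_add_cancel w
    · intro k _
      have hPpoly : P = aeval Aℂ (D.charpoly.divX.comp (Polynomial.C z₀ - X)) := by
        rw [hPdef, aeval_comp]
        congr 1
        rw [map_sub, aeval_X, aeval_C, Algebra.algebraMap_eq_smul_one, hDdef]
      rw [Matrix.mulVec_smul]
      have h8 : (Cℂ * Aℂ ^ k) *ᵥ (P *ᵥ w) = 0 := by
        rw [Matrix.mulVec_mulVec, hPpoly, Matrix.mul_assoc,
          show Aℂ ^ k * aeval Aℂ (D.charpoly.divX.comp (Polynomial.C z₀ - X)) =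
            aeval Aℂ (X ^ k * D.charpoly.divX.comp (Polynomial.C z₀ - X)) by
              rw [_root_.map_mul, _root_.map_pow, aeval_X]]
        exact obs_poly Aℂ Cℂ w hcall _
      rw [h8, smul_zero]
  · rintro ⟨z₀, x₀, h1, h2⟩ j hj
    have hall : ∀ k, (Cℂ * Aℂ ^ k) *ᵥ x₀ = 0 := obs_all Aℂ Cℂ x₀ h2
    have hBu : Bℂ *ᵥ uℂ = z₀ • x₀ - Aℂ *ᵥ x₀ := by
      have h3 : (Aℂ - z₀ • 1) *ᵥ x₀ = Aℂ *ᵥ x₀ - z₀ • x₀ := by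
        rw [Matrix.sub_mulVec, Matrix.smul_mulVec, Matrix.one_mulVec]
      rw [h3] at h1
      have h4 := eq_neg_of_add_eq_zero_right h1
      rw [neg_sub] at h4
      exact h4
    have hcplx : (Cℂ * Aℂ ^ j * Bℂ) *ᵥ uℂ = 0 := by
      rw [← Matrix.mulVec_mulVec, hBu, Matrix.mulVec_sub, Matrix.mulVec_smul, hall j,
        Matrix.mulVec_mulVec, show Cℂ * Aℂ ^ j * Aℂ = Cℂ * Aℂ ^ (j + 1) by
          rw [Matrix.mul_assoc, ← pow_succ], hall (j + 1), smul_zero, sub_zero]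
    funext i
    have h5 := congrFun (hCABu j) i
    rw [hcplx] at h5
    simp only [Pi.zero_apply] at h5 ⊢
    exact_mod_cast h5.symm
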